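/- Let D ⊂ ℂⁿ be a convex domain, a ∈ D, and v a nonzero vector in ℂⁿ. Let δ_D(a,v) be the Euclidean distance from a to ∂D along the complex line L(a,v) = {a + λv : λ ∈ ℂ}. Then the Kobayashi infinitesimal metric satisfies |v| / (2 δ_D(a,v)) ≤ K_D(a,v) ≤ |v| / δ_D(a,v). -/

import Mathlib

open Set Metric

/-- The Kobayashi infinitesimal pseudometric of a domain `D` in a complex normed space:
`K_D(p, v) = inf {α > 0 | ∃ holomorphic f : Δ → D, f 0 = p, f' 0 = v / α}`. -/
noncomputable def kobMetric {E : Type*} [NormedAddCommGroup E] [NormedSpace ℂ E]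
    (D : Set E) (p v : E) : ℝ :=
  sInf {α : ℝ | 0 < α ∧ ∃ f : ℂ → E, DifferentiableOn ℂ f (ball (0:ℂ) 1) ∧
    MapsTo f (ball (0:ℂ) 1) D ∧ f 0 = p ∧ fderiv ℂ f 0 1 = α⁻¹ • v}

/-- The Euclidean distance from `a` to `∂D` along the complex line `{a + λ • v | λ ∈ ℂ}`. -/
noncomputable def deltaLine {E : Type*} [NormedAddCommGroup E] [NormedSpace ℂ E]
    (D : Set E) (a v : E) : ℝ :=
  Metric.infDist a (frontier D ∩ {z | ∃ l : ℂ, z = a + l • v})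

/-- Graham, Frankel: for a convex domain `D ⊆ ℂⁿ`, `a ∈ D` and `v ≠ 0`,
`‖v‖ / (2 δ_D(a,v)) ≤ K_D(a,v) ≤ ‖v‖ / δ_D(a,v)`, where `δ_D(a,v)` is the distance from
`a` to `∂D` along the complex line through `a` in direction `v`. -/

lemma line_hit {E : Type*} [NormedAddCommGroup E] [NormedSpace ℂ E]
    {D : Set E} (hopen : IsOpen D) {a : E} (ha : a ∈ D) {v : E} {l : ℂ}
    (hw : a + l • v ∉ D) :
    ∃ z ∈ frontier D ∩ {z | ∃ m : ℂ, z = a + m • v}, dist a z ≤ ‖l • v‖ := by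
  set φ : ℝ → E := fun t => a + (t • l) • v with hφ
  have hφc : Continuous φ := by
    apply continuous_const.add
    exact (continuous_id.smul continuous_const).smul continuous_const
  set S : Set ℝ := Icc (0:ℝ) 1 ∩ φ ⁻¹' Dᶜ with hS
  have h1S : (1:ℝ) ∈ S := by
    refine ⟨⟨zero_le_one, le_refl 1⟩, ?_⟩
    simpa [φ] using hw
  have hSc : IsClosed S := isClosed_Icc.inter (hopen.isClosed_compl.preimage hφc)
  have hSb : BddBelow S := ⟨0, fun t ht => ht.1.1⟩
  set t₀ := sInf S with ht₀
  have ht₀S : t₀ ∈ S := hSc.csInf_mem ⟨1, h1S⟩ hSb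
  have ht₀0 : 0 < t₀ := by
    rcases lt_or_eq_of_le ht₀S.1.1 with h | h
    · exact h
    · exact absurd (by simpa [φ, ← h] using ht₀S.2) (by simpa using ha)
  have hIco : ∀ t ∈ Ico (0:ℝ) t₀, φ t ∈ D := by
    intro t ht
    by_contra hc
    exact absurd (csInf_le hSb ⟨⟨ht.1, ht.2.le.trans ht₀S.1.2⟩, hc⟩) (not_le.2 ht.2)
  have hcl : φ t₀ ∈ closure D := by
    have h1 : t₀ ∈ closure (Ico (0:ℝ) t₀) := by
      rw [closure_Ico ht₀0.ne]; exact ⟨ht₀0.le, le_refl _⟩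
    have := mem_closure_image (hφc.continuousAt (x := t₀)) h1
    refine closure_mono ?_ this
    rw [image_subset_iff]
    exact fun t ht => hIco t ht
  refine ⟨φ t₀, ⟨?_, ⟨t₀ • l, rfl⟩⟩, ?_⟩
  · rw [hopen.frontier_eq]; exact ⟨hcl, ht₀S.2⟩
  · have : dist a (φ t₀) = ‖(t₀ • l) • v‖ := by
      simp [φ, dist_eq_norm]
    rw [this, smul_assoc, norm_smul]
    calc ‖t₀‖ * ‖l • v‖ ≤ 1 * ‖l • v‖ := by
          apply mul_le_mul_of_nonneg_right _ (norm_nonneg _)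
          rw [Real.norm_eq_abs, abs_of_nonneg ht₀0.le]; exact ht₀S.1.2
      _ = ‖l • v‖ := one_mul _


open Complex in
lemma schwarz_halfplane {h : ℂ → ℂ} {c : ℝ}
    (hd : DifferentiableOn ℂ h (ball (0:ℂ) 1))
    (hm : ∀ z ∈ ball (0:ℂ) 1, (h z).re < c) :
    ‖deriv h 0‖ ≤ 2 * (c - (h 0).re) := by
  have h0m : (0:ℂ) ∈ ball (0:ℂ) 1 := mem_ball_self one_pos
  set w₀ : ℂ := (c:ℂ) - h 0 with hw₀
  have hrew₀ : 0 < w₀.re := by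
    simp only [hw₀, sub_re, ofReal_re]
    linarith [hm 0 h0m]
  set den : ℂ → ℂ := fun z => (c:ℂ) - h z + (starRingEnd ℂ) w₀ with hden
  have hdenre : ∀ z ∈ ball (0:ℂ) 1, 0 < (den z).re := by
    intro z hz
    simp only [hden, add_re, sub_re, ofReal_re, conj_re]
    linarith [hm z hz]
  have hdenne : ∀ z ∈ ball (0:ℂ) 1, den z ≠ 0 := fun z hz h0 => by
    simpa [h0] using hdenre z hz
  set g : ℂ → ℂ := fun z => (h 0 - h z) / den z with hg
  have hg0 : g 0 = 0 := by simp [hg]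
  have hkey : ∀ z ∈ ball (0:ℂ) 1, ‖h 0 - h z‖ < ‖den z‖ := by
    intro z hz
    have h1 : h 0 - h z = ((c:ℂ) - h z) - w₀ := by ring
    rw [h1]
    have hu : 0 < ((c:ℂ) - h z).re := by
      simp only [sub_re, ofReal_re]; linarith [hm z hz]
    set u := (c:ℂ) - h z
    have hsq : normSq (u - w₀) < normSq (u + (starRingEnd ℂ) w₀) := by
      simp only [normSq_apply, sub_re, sub_im, add_re, add_im, conj_re, conj_im]
      nlinarith [hu, hrew₀]
    have := Real.sqrt_lt_sqrt (normSq_nonneg _) hsq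
    simpa only [← Complex.norm_def] using this
  have hmaps : MapsTo g (ball (0:ℂ) 1) (ball (g 0) 1) := by
    intro z hz
    rw [hg0, mem_ball, dist_zero_right, hg]
    rw [norm_div]
    exact div_lt_one (lt_of_le_of_lt (norm_nonneg _) (hkey z hz)) |>.2 (hkey z hz)
  have hgd : DifferentiableOn ℂ g (ball (0:ℂ) 1) := by
    apply DifferentiableOn.div
    · exact (differentiableOn_const _).sub hd
    · exact ((differentiableOn_const _).sub hd).add_const _
    · exact hdenne
  have hhd : HasDerivAt h (deriv h 0) 0 :=
    (hd.differentiableAt (isOpen_ball.mem_nhds h0m)).hasDerivAt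
  set d := deriv h 0
  have hnum : HasDerivAt (fun z => h 0 - h z) (0 - d) 0 := (hasDerivAt_const 0 (h 0)).sub hhd
  have hden' : HasDerivAt den (0 - d) 0 := ((hasDerivAt_const 0 ((c:ℂ))).sub hhd).add_const _
  have hden0 : den 0 = w₀ + (starRingEnd ℂ) w₀ := by simp [hden, hw₀]
  have hden0ne : den 0 ≠ 0 := hdenne 0 h0m
  have hgder : HasDerivAt g (((0 - d) * den 0 - (h 0 - h 0) * (0 - d)) / den 0 ^ 2) 0 :=
    hnum.div hden' hden0ne
  have hderval : deriv g 0 = -d / den 0 := by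
    rw [hgder.deriv]
    rw [sub_self, zero_mul, sub_zero, zero_sub, pow_two]
    field_simp
  have hschwarz : ‖deriv g 0‖ ≤ 1 / 1 :=
    Complex.norm_deriv_le_div_of_mapsTo_ball hgd (hmaps.mono_right ball_subset_closedBall) one_pos
  rw [hderval] at hschwarz
  have hden0val : den 0 = ((2 * w₀.re : ℝ) : ℂ) := by
    rw [hden0, Complex.add_conj]
  have hnorm : ‖den 0‖ = 2 * w₀.re := by
    rw [hden0val, Complex.norm_real, Real.norm_eq_abs, abs_of_pos (by linarith)]
  rw [norm_div, norm_neg, hnorm, div_le_iff₀ (by linarith), one_div_one, one_mul] at hschwarz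
  have : 2 * w₀.re = 2 * (c - (h 0).re) := by
    simp [hw₀]
  linarith [hschwarz, this.symm.le]

theorem kobayashi_convex_estimate
    (n : ℕ) (D : Set (EuclideanSpace ℂ (Fin n)))
    (hconv : Convex ℝ D) (hopen : IsOpen D) (hne : D.Nonempty)
    (a : EuclideanSpace ℂ (Fin n)) (ha : a ∈ D)
    (v : EuclideanSpace ℂ (Fin n)) (hv : v ≠ 0) :
    ‖v‖ / (2 * deltaLine D a v) ≤ kobMetric D a v ∧
      kobMetric D a v ≤ ‖v‖ / deltaLine D a v := by
  have hvpos : 0 < ‖v‖ := norm_pos_iff.2 hv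
  set L : Set (EuclideanSpace ℂ (Fin n)) := {z | ∃ l : ℂ, z = a + l • v} with hL
  have hcoesmul : ∀ (r : ℝ) (y : EuclideanSpace ℂ (Fin n)), ((r:ℂ)) • y = r • y := by
    intro r y
    rw [← smul_one_smul ℂ r y, Complex.real_smul, mul_one]
  have hLclosed : IsClosed L := by
    have heq : L = (fun z => z - a) ⁻¹' ((Submodule.span ℂ {v} : Submodule ℂ (EuclideanSpace ℂ (Fin n))) : Set (EuclideanSpace ℂ (Fin n))) := by
      ext z
      simp only [hL, mem_setOf_eq, mem_preimage, SetLike.mem_coe, Submodule.mem_span_singleton]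
      constructor
      · rintro ⟨l, rfl⟩; exact ⟨l, by abel⟩
      · rintro ⟨l, hl⟩; exact ⟨l, by rw [hl]; abel⟩
    rw [heq]
    exact (Submodule.closed_of_finiteDimensional _).preimage (continuous_id.sub continuous_const)
  set S : Set ℝ := {α : ℝ | 0 < α ∧ ∃ f : ℂ → EuclideanSpace ℂ (Fin n), DifferentiableOn ℂ f (ball (0:ℂ) 1) ∧
    MapsTo f (ball (0:ℂ) 1) D ∧ f 0 = a ∧ fderiv ℂ f 0 1 = α⁻¹ • v} with hS
  have hkob : kobMetric D a v = sInf S := rfl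
  have hbdd : BddBelow S := ⟨0, fun x hx => hx.1.le⟩
  -- generic membership constructor
  have hmemS : ∀ r : ℝ, 0 < r →
      (∀ z : ℂ, z ∈ ball (0:ℂ) 1 → a + (z * (r:ℂ)) • v ∈ D) → r⁻¹ ∈ S := by
    intro r hr hmap
    set w : EuclideanSpace ℂ (Fin n) := (r:ℝ) • v with hwdef
    have hder : ∀ z : ℂ, HasDerivAt (fun z : ℂ => a + z • w) w z := by
      intro z
      have := ((hasDerivAt_id z).smul_const w).const_add a
      simpa using this
    refine ⟨inv_pos.2 hr, fun z => a + z • w, ?_, ?_, by simp, ?_⟩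
    · exact fun z _ => (hder z).differentiableAt.differentiableWithinAt
    · intro z hz
      show a + z • w ∈ D
      have : z • w = (z * (r:ℂ)) • v := by
        rw [hwdef, ← hcoesmul r v, smul_smul]
      rw [this]
      exact hmap z hz
    · have h1 : deriv (fun z : ℂ => a + z • w) 0 = w := (hder 0).deriv
      have h2 : fderiv ℂ (fun z : ℂ => a + z • w) 0 1 = deriv (fun z : ℂ => a + z • w) 0 := rfl
      rw [h2, h1, inv_inv, hwdef]
  by_cases hFe : (frontier D ∩ L).Nonempty
  · -- main case
    have haF : a ∉ frontier D ∩ L := by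
      rintro ⟨haf, -⟩
      rw [hopen.frontier_eq] at haf
      exact haf.2 ha
    have hδpos : 0 < deltaLine D a v :=
      ((isClosed_frontier.inter hLclosed).notMem_iff_infDist_pos hFe).1 haF
    set δ := deltaLine D a v with hδ
    have hmemD : ∀ l : ℂ, ‖l • v‖ < δ → a + l • v ∈ D := by
      intro l hl
      by_contra hc
      obtain ⟨z, hz, hdz⟩ := line_hit hopen ha hc
      have : δ ≤ dist a z := infDist_le_dist_of_mem hz
      linarith
    -- upper bound
    have hupper : ‖v‖ / δ ∈ S := by
      have h1 : ‖v‖ / δ = (δ / ‖v‖)⁻¹ := by rw [inv_div]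
      rw [h1]
      apply hmemS _ (by positivity)
      intro z hz
      apply hmemD
      rw [norm_smul, norm_mul, Complex.norm_real, Real.norm_eq_abs,
        abs_of_pos (by positivity : (0:ℝ) < δ / ‖v‖)]
      rw [mem_ball, dist_zero_right] at hz
      calc ‖z‖ * (δ / ‖v‖) * ‖v‖ = ‖z‖ * δ := by field_simp
        _ < 1 * δ := by exact mul_lt_mul_of_pos_right hz hδpos
        _ = δ := one_mul δ
    have hub : kobMetric D a v ≤ ‖v‖ / δ := csInf_le hbdd hupper
    -- lower bound
    have hlb : ‖v‖ / (2 * δ) ≤ kobMetric D a v := by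
      rw [hkob]
      apply le_csInf ⟨_, hupper⟩
      rintro α ⟨hα, f, hfd, hfm, hf0, hfder⟩
      obtain ⟨z₀, hz₀mem, hz₀dist⟩ :=
        (isClosed_frontier.inter hLclosed).exists_infDist_eq_dist hFe a
      obtain ⟨l₀, hl₀⟩ := hz₀mem.2
      have hz₀notD : z₀ ∉ D := by
        have := hz₀mem.1
        rw [hopen.frontier_eq] at this
        exact this.2
      obtain ⟨ℓ, hℓ⟩ := geometric_hahn_banach_open_point hconv hopen hz₀notD
      set Λ : EuclideanSpace ℂ (Fin n) →L[ℂ] ℂ := ℓ.extendTo𝕜' with hΛ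
      have hre : ∀ x : EuclideanSpace ℂ (Fin n), (Λ x).re = ℓ x := fun x => by
        rw [hΛ, ContinuousLinearMap.extendTo𝕜', StrongDual.extendRCLike_apply]
        simp
      set h : ℂ → ℂ := fun z => Λ (f z) with hh
      have hhd : DifferentiableOn ℂ h (ball (0:ℂ) 1) :=
        Λ.differentiable.comp_differentiableOn hfd
      set c := ℓ z₀ with hc
      have hm : ∀ z ∈ ball (0:ℂ) 1, (h z).re < c := fun z hz => by
        rw [hh, hre]; exact hℓ _ (hfm hz)
      have hschwarz := schwarz_halfplane hhd hm
      have h0m : (0:ℂ) ∈ ball (0:ℂ) 1 := mem_ball_self one_pos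
      -- compute deriv h 0
      have hfat : DifferentiableAt ℂ f 0 := hfd.differentiableAt (isOpen_ball.mem_nhds h0m)
      have hcomp : HasFDerivAt h (Λ.comp (fderiv ℂ f 0)) 0 :=
        Λ.hasFDerivAt.comp 0 hfat.hasFDerivAt
      have hderh : deriv h 0 = Λ (α⁻¹ • v) := by
        rw [hcomp.hasDerivAt.deriv]
        simp only [ContinuousLinearMap.coe_comp', Function.comp_apply, hfder]
      have hΛsmul : Λ (α⁻¹ • v) = ((α⁻¹ : ℝ) : ℂ) * Λ v := by
        rw [← hcoesmul α⁻¹ v, map_smul, smul_eq_mul]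
      have hnormder : ‖deriv h 0‖ = α⁻¹ * ‖Λ v‖ := by
        rw [hderh, hΛsmul, norm_mul, Complex.norm_real, Real.norm_eq_abs,
          abs_of_pos (inv_pos.2 hα)]
      -- h 0
      have hh0 : (h 0).re = ℓ a := by
        show (Λ (f 0)).re = ℓ a
        rw [hf0, hre]
      -- geometry
      have hl₀norm : δ = ‖l₀‖ * ‖v‖ := by
        rw [hδ]
        show Metric.infDist a (frontier D ∩ L) = _
        rw [hz₀dist, hl₀, dist_eq_norm]
        simp [norm_smul]
      have hgeo : c - ℓ a ≤ ‖l₀‖ * ‖Λ v‖ := by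
        have h1 : c - ℓ a = (Λ (l₀ • v)).re := by
          have : Λ (l₀ • v) = Λ z₀ - Λ a := by
            rw [← map_sub, hl₀]; congr 1; abel
          rw [this, Complex.sub_re, hre, hre, hc]
        rw [h1, map_smul, smul_eq_mul]
        calc (l₀ * Λ v).re ≤ ‖l₀ * Λ v‖ := Complex.re_le_norm _
          _ = ‖l₀‖ * ‖Λ v‖ := norm_mul _ _
      have hca : 0 < c - ℓ a := by
        have := hℓ a ha
        rw [hc]; linarith
      have hΛvpos : 0 < ‖Λ v‖ := by
        by_contra hcon
        push_neg at hcon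
        have : ‖Λ v‖ = 0 := le_antisymm hcon (norm_nonneg _)
        rw [this, mul_zero] at hgeo
        linarith
      have hchain : α⁻¹ * ‖Λ v‖ ≤ 2 * (δ / ‖v‖) * ‖Λ v‖ := by
        have h2 : ‖l₀‖ = δ / ‖v‖ := by
          rw [hl₀norm]; field_simp
        calc α⁻¹ * ‖Λ v‖ = ‖deriv h 0‖ := hnormder.symm
          _ ≤ 2 * (c - (h 0).re) := hschwarz
          _ = 2 * (c - ℓ a) := by rw [hh0]
          _ ≤ 2 * (‖l₀‖ * ‖Λ v‖) := by linarith
          _ = 2 * (δ / ‖v‖) * ‖Λ v‖ := by rw [h2]; ring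
      have hinv : α⁻¹ ≤ 2 * (δ / ‖v‖) :=
        le_of_mul_le_mul_right (by linarith) hΛvpos
      rw [div_le_iff₀ (by positivity : (0:ℝ) < 2 * δ)]
      have hmul := mul_le_mul_of_nonneg_left hinv hα.le
      rw [mul_inv_cancel₀ hα.ne'] at hmul
      calc ‖v‖ = 1 * ‖v‖ := (one_mul _).symm
        _ ≤ (α * (2 * (δ / ‖v‖))) * ‖v‖ := mul_le_mul_of_nonneg_right hmul (norm_nonneg v)
        _ = α * (2 * δ) := by field_simp
    exact ⟨hlb, hub⟩
  · -- degenerate case : the line misses the frontier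
    have hFempty : frontier D ∩ L = ∅ := not_nonempty_iff_eq_empty.1 hFe
    have hδ0 : deltaLine D a v = 0 := by
      show Metric.infDist a (frontier D ∩ L) = 0
      rw [hFempty, infDist_empty]
    have hline : ∀ l : ℂ, a + l • v ∈ D := by
      intro l
      by_contra hc
      obtain ⟨z, hz, -⟩ := line_hit hopen ha hc
      rw [hFempty] at hz
      exact hz
    have hmem : ∀ ε : ℝ, 0 < ε → ε ∈ S := by
      intro ε hε
      have := hmemS ε⁻¹ (inv_pos.2 hε) (fun z _ => hline _)
      rwa [inv_inv] at this
    have h0le : 0 ≤ kobMetric D a v := by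
      rw [hkob]; exact le_csInf ⟨1, hmem 1 one_pos⟩ fun b hb => hb.1.le
    have hle0 : kobMetric D a v ≤ 0 := by
      by_contra hcon
      push_neg at hcon
      have h2 : kobMetric D a v ≤ kobMetric D a v / 2 := by
        rw [hkob]; exact csInf_le hbdd (hmem _ (by rw [← hkob]; linarith))
      linarith
    have hk0 : kobMetric D a v = 0 := le_antisymm hle0 h0le
    rw [hδ0, hk0]
    norm_num
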